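/- arXiv:1810.03003 — 3 statements merged into one kernel-verified Lean document; each statement's English description precedes it below -/
import Mathlib

section
/- Let σ be a 2×2 real matrix (possibly non-symmetric) with 1 + Tr σ + det σ ≠ 0, and let u, v : Ω → ℝ be differentiable at a point z ∈ Ω ⊂ ℝ² ≅ ℂ. Set f = u + iv, let f_z = (∂_{x₁}f − i∂_{x₂}f)/2 and f_{z̄} = (∂_{x₁}f + i∂_{x₂}f)/2 be the Wirtinger derivatives, and define μ = (σ₂₂ − σ₁₁ − i(σ₁₂+σ₂₁))/(1 + Tr σ + det σ) and ν = (1 − det σ + i(σ₁₂ − σ₂₁))/(1 + Tr σ + det σ). Then the first-order system ∇v = Jσ∇u at z is equivalent to the Beltrami-type equation f_{z̄} = μ f_z + ν conj(f_z) at z, where J = ((0,−1),(1,0)). -/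
open Complex
open scoped Topology

noncomputable section

/-- Wirtinger derivative `f_z = (∂_{x₁}f − i ∂_{x₂}f)/2` of `f : ℂ → ℂ`
(the plane `ℝ²` being identified with `ℂ`, `z = x₁ + i x₂`). -/
def wirtingerZ (f : ℂ → ℂ) (z : ℂ) : ℂ :=
  (fderiv ℝ f z 1 - Complex.I * fderiv ℝ f z Complex.I) / 2

/-- Wirtinger derivative `f_{z̄} = (∂_{x₁}f + i ∂_{x₂}f)/2` of `f : ℂ → ℂ`. -/
def wirtingerZbar (f : ℂ → ℂ) (z : ℂ) : ℂ :=
  (fderiv ℝ f z 1 + Complex.I * fderiv ℝ f z Complex.I) / 2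

private lemma key_real (s00 s01 s10 s11 a b c d : ℝ)
    (hs : 1 + (s00 + s11) + (s00 * s11 - s01 * s10) ≠ 0) :
    (c = -(s10 * a + s11 * b) ∧ d = s00 * a + s01 * b) ↔
    ((1 + (s00 + s11) + (s00 * s11 - s01 * s10)) * (a - d)
        = (s11 - s00 + 1 - (s00 * s11 - s01 * s10)) * (a + d) + 2 * s01 * (c - b) ∧
     (1 + (s00 + s11) + (s00 * s11 - s01 * s10)) * (c + b)
        = (s11 - s00 - 1 + (s00 * s11 - s01 * s10)) * (c - b) - 2 * s10 * (a + d)) := by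
  constructor
  · rintro ⟨hc, hd⟩
    subst hc; subst hd; constructor <;> ring
  · rintro ⟨h1, h2⟩
    have h4s : (4 : ℝ) * (1 + (s00 + s11) + (s00 * s11 - s01 * s10)) ≠ 0 :=
      mul_ne_zero four_ne_zero hs
    have hc4 : (4 : ℝ) * (1 + (s00 + s11) + (s00 * s11 - s01 * s10)) *
        (c + (s10 * a + s11 * b)) = 0 := by
      linear_combination (2 * s10) * h1 + (2 * (1 + s11)) * h2
    have hd4 : (4 : ℝ) * (1 + (s00 + s11) + (s00 * s11 - s01 * s10)) *
        (d - (s00 * a + s01 * b)) = 0 := by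
      linear_combination (-2 * (1 + s00)) * h1 + (-2 * s01) * h2
    have hc0 := (mul_eq_zero.mp hc4).resolve_left h4s
    have hd0 := (mul_eq_zero.mp hd4).resolve_left h4s
    constructor <;> linarith

/-- Let `σ` be a `2×2` real matrix (possibly non-symmetric) with `1 + Tr σ + det σ ≠ 0`,
and let `u, v` be differentiable at a point `z`.  Set `f = u + iv`, and let
`μ = (σ₂₂ − σ₁₁ − i(σ₁₂+σ₂₁))/(1 + Tr σ + det σ)`,
`ν = (1 − det σ + i(σ₁₂ − σ₂₁))/(1 + Tr σ + det σ)`.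
Then the first-order system `∇v = Jσ∇u` at `z` (i.e. `v_{x₁} = −(σ∇u)₂`, `v_{x₂} = (σ∇u)₁`,
where `J = ((0,−1),(1,0))`) is equivalent to the Beltrami-type equation
`f_{z̄} = μ f_z + ν conj(f_z)` at `z`. -/
theorem gradient_system_iff_beltrami
    (σ : Matrix (Fin 2) (Fin 2) ℝ) (hσ : 1 + σ.trace + σ.det ≠ 0)
    (u v : ℂ → ℝ) (z : ℂ)
    (hu : DifferentiableAt ℝ u z) (hv : DifferentiableAt ℝ v z) :
    (fderiv ℝ v z 1 =
        -(σ 1 0 * fderiv ℝ u z 1 + σ 1 1 * fderiv ℝ u z Complex.I) ∧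
     fderiv ℝ v z Complex.I =
        σ 0 0 * fderiv ℝ u z 1 + σ 0 1 * fderiv ℝ u z Complex.I)
    ↔
    (wirtingerZbar (fun w => (u w : ℂ) + v w * Complex.I) z =
      ((((σ 1 1 - σ 0 0 : ℝ) : ℂ) - ((σ 0 1 + σ 1 0 : ℝ) : ℂ) * Complex.I) /
          ((1 + σ.trace + σ.det : ℝ) : ℂ)) *
        wirtingerZ (fun w => (u w : ℂ) + v w * Complex.I) z +
      ((((1 - σ.det : ℝ) : ℂ) + ((σ 0 1 - σ 1 0 : ℝ) : ℂ) * Complex.I) /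
          ((1 + σ.trace + σ.det : ℝ) : ℂ)) *
        (starRingEnd ℂ) (wirtingerZ (fun w => (u w : ℂ) + v w * Complex.I) z)) := by
  have hfu : HasFDerivAt (fun w => (u w : ℂ)) (Complex.ofRealCLM.comp (fderiv ℝ u z)) z :=
    Complex.ofRealCLM.hasFDerivAt.comp z hu.hasFDerivAt
  have hfv : HasFDerivAt (fun w => (v w : ℂ) * Complex.I)
      ((fderiv ℝ v z).smulRight Complex.I) z := by
    simpa [Complex.real_smul] using hv.hasFDerivAt.smul_const Complex.I
  have hf : HasFDerivAt (fun w => (u w : ℂ) + v w * Complex.I)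
      (Complex.ofRealCLM.comp (fderiv ℝ u z) + (fderiv ℝ v z).smulRight Complex.I) z :=
    hfu.add hfv
  set a := fderiv ℝ u z 1 with ha
  set b := fderiv ℝ u z Complex.I with hb
  set c := fderiv ℝ v z 1 with hc
  set d := fderiv ℝ v z Complex.I with hd
  have h1 : fderiv ℝ (fun w => (u w : ℂ) + v w * Complex.I) z 1
      = (a : ℂ) + (c : ℂ) * Complex.I := by
    rw [hf.fderiv]; simp [Complex.real_smul, ha, hc]
  have hI : fderiv ℝ (fun w => (u w : ℂ) + v w * Complex.I) z Complex.I
      = (b : ℂ) + (d : ℂ) * Complex.I := by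
    rw [hf.fderiv]; simp [Complex.real_smul, hb, hd]
  have hY : wirtingerZ (fun w => (u w : ℂ) + v w * Complex.I) z
      = (((a + d) / 2 : ℝ) : ℂ) + (((c - b) / 2 : ℝ) : ℂ) * Complex.I := by
    rw [wirtingerZ, h1, hI]
    push_cast
    linear_combination (-(d : ℂ) / 2) * Complex.I_sq
  have hYb : wirtingerZbar (fun w => (u w : ℂ) + v w * Complex.I) z
      = (((a - d) / 2 : ℝ) : ℂ) + (((c + b) / 2 : ℝ) : ℂ) * Complex.I := by
    rw [wirtingerZbar, h1, hI]
    push_cast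
    linear_combination ((d : ℂ) / 2) * Complex.I_sq
  have hYc : (starRingEnd ℂ) (wirtingerZ (fun w => (u w : ℂ) + v w * Complex.I) z)
      = (((a + d) / 2 : ℝ) : ℂ) - (((c - b) / 2 : ℝ) : ℂ) * Complex.I := by
    rw [hY, map_add, map_mul, Complex.conj_ofReal, Complex.conj_ofReal, Complex.conj_I]; ring
  rw [hYb, hYc, hY, Matrix.trace_fin_two σ, Matrix.det_fin_two σ]
  have hs : (1 : ℝ) + (σ 0 0 + σ 1 1) + (σ 0 0 * σ 1 1 - σ 0 1 * σ 1 0) ≠ 0 := by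
    rwa [Matrix.trace_fin_two σ, Matrix.det_fin_two σ] at hσ
  have hsC : ((1 + (σ 0 0 + σ 1 1) + (σ 0 0 * σ 1 1 - σ 0 1 * σ 1 0) : ℝ) : ℂ) ≠ 0 :=
    Complex.ofReal_ne_zero.mpr hs
  rw [key_real (σ 0 0) (σ 0 1) (σ 1 0) (σ 1 1) a b c d hs]
  rw [div_mul_eq_mul_div, div_mul_eq_mul_div, ← add_div, eq_div_iff hsC]
  rw [Complex.ext_iff]
  simp only [Complex.add_re, Complex.add_im, Complex.sub_re, Complex.sub_im,
    Complex.mul_re, Complex.mul_im, Complex.ofReal_re, Complex.ofReal_im,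
    Complex.I_re, Complex.I_im]
  constructor
  · rintro ⟨p, q⟩
    constructor
    · linear_combination p / 2
    · linear_combination q / 2
  · rintro ⟨p, q⟩
    constructor
    · linear_combination 2 * p
    · linear_combination 2 * q
end
end

section
/- Let K ≥ 1 and let σ be a 2×2 real matrix (possibly non-symmetric) satisfying σξ·ξ ≥ K⁻¹|ξ|² and σ⁻¹ξ·ξ ≥ K⁻¹|ξ|² for all ξ ∈ ℝ². Define the complex dilatations μ = (σ₂₂ − σ₁₁ − i(σ₁₂+σ₂₁))/(1 + Tr σ + det σ) and ν = (1 − det σ + i(σ₁₂ − σ₂₁))/(1 + Tr σ + det σ). Then there exists a constant k < 1, depending only on K, such that |μ| + |ν| ≤ k. -/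
open Complex
open scoped Topology

noncomputable section

/-- Discriminant lemma: a nonnegative binary quadratic form with nonnegative diagonal
coefficients has nonpositive discriminant. -/
lemma disc_aux {u v w : ℝ} (hu : 0 ≤ u) (hv : 0 ≤ v)
    (h : ∀ x y : ℝ, 0 ≤ u * x ^ 2 + w * x * y + v * y ^ 2) : w ^ 2 ≤ 4 * u * v := by
  rcases eq_or_lt_of_le hu with hu0 | hu0
  · rcases eq_or_lt_of_le hv with hv0 | hv0
    · have := h w (-1); nlinarith
    · have := h (-2 * v) w; nlinarith
  · have := h w (-2 * u); nlinarith


set_option maxHeartbeats 1600000 in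
/-- Core scalar estimate. -/
lemma dilatation_core (K τ a b c d e : ℝ) (hK : 1 ≤ K) (hτ0 : 0 < τ) (hKτ : K * τ = 1)
    (ha : τ ≤ a) (hd : τ ≤ d)
    (hdisc1 : (b + c) ^ 2 ≤ 4 * (a - τ) * (d - τ))
    (he : e = a * d - b * c) (he0 : 0 < e)
    (hea : e * τ ≤ a) (hed : e * τ ≤ d)
    (hdisc2 : (b + c) ^ 2 ≤ 4 * (d - e * τ) * (a - e * τ)) :
    ‖(((d - a : ℝ) : ℂ) - ((b + c : ℝ) : ℂ) * Complex.I)‖ +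
      ‖(((1 - e : ℝ) : ℂ) + ((b - c : ℝ) : ℂ) * Complex.I)‖
      ≤ (1 - 1 / (K * (K + 1) ^ 2)) * (1 + (a + d) + e) := by
  have hK0 : (0:ℝ) < K := lt_of_lt_of_le one_pos hK
  have step1 : 0 ≤ e * (1 - (a + d) * τ + e * τ ^ 2) := by nlinarith [sq_nonneg (b - c)]
  have step2 : 0 ≤ 1 - (a + d) * τ + e * τ ^ 2 := by nlinarith
  have heKd : e ≤ K * d := by nlinarith
  have heKa : e ≤ K * a := by nlinarith
  have hs : a + d ≤ 2 * K := by nlinarith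
  have heK : e ≤ K ^ 2 := by nlinarith
  set X := ‖(((d - a : ℝ) : ℂ) - ((b + c : ℝ) : ℂ) * Complex.I)‖ with hXdef
  set Y := ‖(((1 - e : ℝ) : ℂ) + ((b - c : ℝ) : ℂ) * Complex.I)‖ with hYdef
  have hX2 : X ^ 2 = (d - a) ^ 2 + (b + c) ^ 2 := by
    rw [hXdef, Complex.sq_norm]
    simp [Complex.normSq_apply]
    ring
  have hY2 : Y ^ 2 = (1 - e) ^ 2 + (b - c) ^ 2 := by
    rw [hYdef, Complex.sq_norm]
    simp [Complex.normSq_apply]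
    ring
  have hX0 : 0 ≤ X := norm_nonneg _
  have hY0 : 0 ≤ Y := norm_nonneg _
  have hX : X ≤ a + d - τ := by
    nlinarith [hX2, hdisc1, ha, hd, hτ0, hX0, sq_nonneg (X - (a + d - τ))]
  have hY : Y ≤ 1 + e := by
    nlinarith [hY2, hdisc1, ha, hd, hτ0, hY0, sq_nonneg (Y - (1 + e)), sq_nonneg (b + c)]
  have hD : 0 < 1 + (a + d) + e := by nlinarith
  have hC : 0 < K * (K + 1) ^ 2 := by positivity
  have hDle : 1 + (a + d) + e ≤ (K + 1) ^ 2 := by nlinarith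
  have key : (1 + (a + d) + e) / (K * (K + 1) ^ 2) ≤ τ := by
    rw [div_le_iff₀ hC]
    nlinarith
  have expand : (1 - 1 / (K * (K + 1) ^ 2)) * (1 + (a + d) + e)
      = (1 + (a + d) + e) - (1 + (a + d) + e) / (K * (K + 1) ^ 2) := by
    field_simp
  rw [expand]
  linarith

set_option maxHeartbeats 1600000 in
/-- Given `K ≥ 1`, there exists a constant `k < 1`, depending only on `K`, such that for
every `2×2` real matrix `σ` (possibly non-symmetric) satisfying the ellipticity conditions
`σξ·ξ ≥ K⁻¹|ξ|²` and `σ⁻¹ξ·ξ ≥ K⁻¹|ξ|²` for all `ξ ∈ ℝ²`, the complex dilatations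
`μ = (σ₂₂ − σ₁₁ − i(σ₁₂+σ₂₁))/(1 + Tr σ + det σ)` and
`ν = (1 − det σ + i(σ₁₂ − σ₂₁))/(1 + Tr σ + det σ)` satisfy `|μ| + |ν| ≤ k`. -/
theorem complex_dilatations_bound (K : ℝ) (hK : 1 ≤ K) :
    ∃ k : ℝ, k < 1 ∧
      ∀ σ : Matrix (Fin 2) (Fin 2) ℝ,
        (∀ ξ : Fin 2 → ℝ, K⁻¹ * (ξ 0 ^ 2 + ξ 1 ^ 2) ≤ ∑ i, σ.mulVec ξ i * ξ i) →
        (∀ ξ : Fin 2 → ℝ, K⁻¹ * (ξ 0 ^ 2 + ξ 1 ^ 2) ≤ ∑ i, σ⁻¹.mulVec ξ i * ξ i) →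
        ‖((((σ 1 1 - σ 0 0 : ℝ) : ℂ) - ((σ 0 1 + σ 1 0 : ℝ) : ℂ) * Complex.I) /
            ((1 + σ.trace + σ.det : ℝ) : ℂ))‖ +
        ‖((((1 - σ.det : ℝ) : ℂ) + ((σ 0 1 - σ 1 0 : ℝ) : ℂ) * Complex.I) /
            ((1 + σ.trace + σ.det : ℝ) : ℂ))‖ ≤ k := by
  have hK0 : (0:ℝ) < K := lt_of_lt_of_le one_pos hK
  refine ⟨1 - 1 / (K * (K + 1) ^ 2), by
    have : 0 < 1 / (K * (K + 1) ^ 2) := by positivity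
    linarith, ?_⟩
  intro σ h1 h2
  set τ : ℝ := K⁻¹ with hτdef
  have hτ0 : 0 < τ := inv_pos.mpr hK0
  have hKτ : K * τ = 1 := mul_inv_cancel₀ (ne_of_gt hK0)
  rw [Matrix.trace_fin_two]
  set a := σ 0 0; set b := σ 0 1; set c := σ 1 0; set d := σ 1 1
  -- extract information from the first ellipticity hypothesis
  have H1 : ∀ x y : ℝ, τ * (x ^ 2 + y ^ 2) ≤ (a * x + b * y) * x + (c * x + d * y) * y := by
    intro x y
    have := h1 ![x, y]
    simpa [Matrix.mulVec, dotProduct, Fin.sum_univ_two] using this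
  have ha : τ ≤ a := by have := H1 1 0; linarith
  have hd : τ ≤ d := by have := H1 0 1; linarith
  have hdisc1 : (b + c) ^ 2 ≤ 4 * (a - τ) * (d - τ) := by
    apply disc_aux (by linarith) (by linarith)
    intro x y
    have := H1 x y
    nlinarith [this]
  -- the determinant is nonzero
  have hdet_ne : σ.det ≠ 0 := by
    intro h0
    have hz : σ⁻¹ = 0 := Matrix.nonsing_inv_apply_not_isUnit σ (by simp [h0])
    have := h2 ![1, 0]
    rw [hz] at this
    simp [Matrix.mulVec, dotProduct, Fin.sum_univ_two] at this
    nlinarith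
  have hinv : σ⁻¹ = (σ.det)⁻¹ • !![d, -b; -c, a] := by
    rw [Matrix.inv_def, Matrix.adjugate_fin_two, Ring.inverse_eq_inv']
  set e := σ.det with hedef
  have he : e = a * d - b * c := Matrix.det_fin_two σ
  -- extract information from the second ellipticity hypothesis
  have H2 : ∀ x y : ℝ, τ * (x ^ 2 + y ^ 2) ≤
      e⁻¹ * ((d * x - b * y) * x + (-(c * x) + a * y) * y) := by
    intro x y
    have := h2 ![x, y]
    rw [hinv] at this
    simp only [Matrix.mulVec, dotProduct, Fin.sum_univ_two, Matrix.smul_apply] at this ⊢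
    ring_nf at this ⊢
    convert this using 2 <;> norm_num [Matrix.smul_apply] <;> ring <;> simp
  have he0 : 0 < e := by
    rcases lt_trichotomy e 0 with h | h | h
    · have h10 := H2 1 0
      have : e⁻¹ < 0 := inv_neg''.mpr h
      nlinarith
    · exact absurd h hdet_ne
    · exact h
  have heinv : e * e⁻¹ = 1 := mul_inv_cancel₀ hdet_ne
  have H2' : ∀ x y : ℝ, e * τ * (x ^ 2 + y ^ 2) ≤
      (d * x - b * y) * x + (-(c * x) + a * y) * y := by
    intro x y
    have h := mul_le_mul_of_nonneg_left (H2 x y) (le_of_lt he0)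
    calc e * τ * (x ^ 2 + y ^ 2) = e * (τ * (x ^ 2 + y ^ 2)) := by ring
      _ ≤ e * (e⁻¹ * ((d * x - b * y) * x + (-(c * x) + a * y) * y)) := h
      _ = (e * e⁻¹) * ((d * x - b * y) * x + (-(c * x) + a * y) * y) := by ring
      _ = (d * x - b * y) * x + (-(c * x) + a * y) * y := by rw [heinv, one_mul]
  have hed : e * τ ≤ d := by have := H2' 1 0; linarith
  have hea : e * τ ≤ a := by have := H2' 0 1; linarith
  have hdisc2 : (b + c) ^ 2 ≤ 4 * (d - e * τ) * (a - e * τ) := by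
    have h := disc_aux (u := d - e * τ) (v := a - e * τ) (w := -(b + c))
      (by linarith) (by linarith) ?_
    · nlinarith [h]
    · intro x y
      have := H2' x y
      nlinarith [this]
  have hD : 0 < 1 + (a + d) + e := by nlinarith
  have hDabs : ‖((1 + (a + d) + e : ℝ) : ℂ)‖ = 1 + (a + d) + e := by
    rw [Complex.norm_of_nonneg hD.le]
  have core := dilatation_core K τ a b c d e hK hτ0 hKτ ha hd hdisc1 he he0 hea hed hdisc2
  rw [norm_div, norm_div, hDabs, ← add_div, div_le_iff₀ hD]
  exact core
end
end

section
/- Let G ⊂ ℝ² be a Jordan domain with boundary Γ, let r > 0, w₀ ∈ ℝ², and let U : cl G → cl B_r(w₀) be a homeomorphism mapping Γ onto the circle ∂B_r(w₀). Then for every unit vector ξ ∈ ℝ², the function g = (U·ξ)|_Γ is unimodal on Γ: Γ splits into two simple arcs on which g is respectively nondecreasing and nonincreasing. -/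
open Set Real
open scoped Topology

noncomputable section

/-- The plane `ℝ²`. -/
abbrev E2 : Type := EuclideanSpace ℝ (Fin 2)

/-- A Jordan curve in the plane: the image of a continuous map `φ : ℝ → ℝ²` of period `1`
which is injective on a period. -/
def IsJordanCurve (Γ : Set E2) : Prop :=
  ∃ φ : ℝ → E2, Continuous φ ∧ Function.Periodic φ 1 ∧
    Set.InjOn φ (Set.Ico 0 1) ∧ φ '' Set.Icc 0 1 = Γ

/-- A Jordan domain: a bounded, connected, open planar set whose boundary is a Jordan
curve. -/
def IsJordanDomain (G : Set E2) : Prop :=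
  IsOpen G ∧ IsConnected G ∧ Bornology.IsBounded G ∧ IsJordanCurve (frontier G)

/-- A non-constant continuous function `g` on a Jordan curve `Γ` is unimodal if `Γ` splits
into two simple arcs (with the orientation inherited from `Γ`, here given by a periodic
parametrization) on which `g` is respectively nondecreasing and nonincreasing. -/
def UnimodalOn (g : E2 → ℝ) (Γ : Set E2) : Prop :=
  ContinuousOn g Γ ∧ (¬ ∃ c : ℝ, ∀ x ∈ Γ, g x = c) ∧
  ∃ φ : ℝ → E2, ∃ c ∈ Set.Icc (0 : ℝ) 1,
    Continuous φ ∧ Function.Periodic φ 1 ∧ Set.InjOn φ (Set.Ico 0 1) ∧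
    φ '' Set.Icc 0 1 = Γ ∧
    MonotoneOn (g ∘ φ) (Set.Icc 0 c) ∧ AntitoneOn (g ∘ φ) (Set.Icc c 1)

lemma circle_param (r : ℝ) (hr : 0 < r) (w₀ ξ : E2) (hξ : ‖ξ‖ = 1) :
    ∃ ψ : ℝ → E2, Continuous ψ ∧ Function.Periodic ψ 1 ∧ Set.InjOn ψ (Set.Ico 0 1) ∧
      ψ '' Set.Icc 0 1 = Metric.sphere w₀ r ∧
      (∀ t, ∑ i, ψ t i * ξ i = (∑ i, w₀ i * ξ i) - r * Real.cos (2*π*t)) := by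
  have hξ2 : ξ 0 ^ 2 + ξ 1 ^ 2 = 1 := by
    have := hξ
    rw [EuclideanSpace.norm_eq, Real.sqrt_eq_one] at this
    simpa [Fin.sum_univ_two, sq_abs] using this
  set ξp : E2 := WithLp.toLp 2 (fun i => if i = 0 then -ξ 1 else ξ 0 : Fin 2 → ℝ) with hξp
  have hξp0 : ξp 0 = -ξ 1 := rfl
  have hξp1 : ξp 1 = ξ 0 := rfl
  set ψ : ℝ → E2 := fun t =>
    w₀ + (-(r * Real.cos (2*π*t))) • ξ + (r * Real.sin (2*π*t)) • ξp with hψdef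
  have hcoord : ∀ t : ℝ, ψ t 0 = w₀ 0 - r * Real.cos (2*π*t) * ξ 0 - r * Real.sin (2*π*t) * ξ 1
      ∧ ψ t 1 = w₀ 1 - r * Real.cos (2*π*t) * ξ 1 + r * Real.sin (2*π*t) * ξ 0 := by
    intro t
    constructor <;>
    · simp only [hψdef, PiLp.add_apply, PiLp.smul_apply, smul_eq_mul, hξp0, hξp1]
      ring
  have hcont : Continuous ψ := by
    apply Continuous.add
    apply Continuous.add continuous_const
    · fun_prop
    · fun_prop
  have hper : Function.Periodic ψ 1 := by
    intro t
    have h1 : 2*π*(t+1) = 2*π*t + 2*π := by ring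
    simp only [hψdef, h1, Real.cos_add_two_pi, Real.sin_add_two_pi]
  -- value of the linear functional
  have hval : ∀ t, ∑ i, ψ t i * ξ i = (∑ i, w₀ i * ξ i) - r * Real.cos (2*π*t) := by
    intro t
    rw [Fin.sum_univ_two, Fin.sum_univ_two, (hcoord t).1, (hcoord t).2]
    linear_combination (-(r * Real.cos (2*π*t))) * hξ2
  -- membership in the sphere
  have hmem : ∀ t, ψ t ∈ Metric.sphere w₀ r := by
    intro t
    rw [Metric.mem_sphere, dist_eq_norm, EuclideanSpace.norm_eq]
    rw [show Real.sqrt (∑ i, ‖(ψ t - w₀) i‖ ^ 2) = Real.sqrt (∑ i, ((ψ t - w₀) i) ^ 2) by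
      simp [sq_abs]]
    have h0 : (ψ t - w₀) 0 = ψ t 0 - w₀ 0 := rfl
    have h1 : (ψ t - w₀) 1 = ψ t 1 - w₀ 1 := rfl
    rw [Fin.sum_univ_two, h0, h1, (hcoord t).1, (hcoord t).2]
    rw [show (w₀ 0 - r * Real.cos (2*π*t) * ξ 0 - r * Real.sin (2*π*t) * ξ 1 - w₀ 0) ^ 2 +
        (w₀ 1 - r * Real.cos (2*π*t) * ξ 1 + r * Real.sin (2*π*t) * ξ 0 - w₀ 1) ^ 2 = r ^ 2 by
      linear_combination (r^2 * (Real.cos (2*π*t)^2 + Real.sin (2*π*t)^2)) * hξ2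
        + r^2 * Real.sin_sq_add_cos_sq (2*π*t)]
    exact Real.sqrt_sq hr.le
  -- injectivity
  have hinj : Set.InjOn ψ (Set.Ico 0 1) := by
    intro s hs t ht hst
    have e0 : ψ s 0 = ψ t 0 := by rw [hst]
    have e1 : ψ s 1 = ψ t 1 := by rw [hst]
    rw [(hcoord s).1, (hcoord t).1] at e0
    rw [(hcoord s).2, (hcoord t).2] at e1
    have hc1 : r * (Real.cos (2*π*s) - Real.cos (2*π*t)) * (ξ 0^2 + ξ 1^2) = 0 := by
      linear_combination (-(ξ 0)) * e0 + (-(ξ 1)) * e1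
    have hs1' : r * (Real.sin (2*π*s) - Real.sin (2*π*t)) * (ξ 0^2 + ξ 1^2) = 0 := by
      linear_combination (ξ 0) * e1 + (-(ξ 1)) * e0
    rw [hξ2, mul_one] at hc1 hs1'
    have hcos : Real.cos (2*π*s) = Real.cos (2*π*t) := by
      rcases mul_eq_zero.1 hc1 with h | h
      · exact absurd h hr.ne'
      · linarith
    have hsin : Real.sin (2*π*s) = Real.sin (2*π*t) := by
      rcases mul_eq_zero.1 hs1' with h | h
      · exact absurd h hr.ne'
      · linarith
    have hexp : Complex.exp ((2*π*s : ℝ) * Complex.I) = Complex.exp ((2*π*t : ℝ) * Complex.I) := by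
      rw [Complex.exp_mul_I, Complex.exp_mul_I]
      rw [← Complex.ofReal_cos, ← Complex.ofReal_sin, ← Complex.ofReal_cos,
        ← Complex.ofReal_sin, hcos, hsin]
    rw [Complex.exp_eq_exp_iff_exists_int] at hexp
    obtain ⟨n, hn⟩ := hexp
    have hn' : (2*π*s : ℝ) = 2*π*t + n * (2*π) := by
      have := hn
      have hI : ((2*π*s : ℝ) : ℂ) * Complex.I = ((2*π*t + n * (2*π) : ℝ) : ℂ) * Complex.I := by
        rw [this]; push_cast; ring
      have := mul_right_cancel₀ Complex.I_ne_zero hI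
      exact_mod_cast this
    have hπ : (0:ℝ) < π := Real.pi_pos
    have hsn : s = t + n := by
      have : 2*π*(s - t - n) = 0 := by linarith
      have h2 : s - t - n = 0 := by
        rcases mul_eq_zero.1 this with h | h
        · nlinarith
        · linarith
      linarith
    have hn0 : n = 0 := by
      obtain ⟨hs0, hs1⟩ := hs
      obtain ⟨ht0, ht1⟩ := ht
      have hne : (n : ℝ) = s - t := by rw [hsn]; ring
      have ha : (-1 : ℝ) < (n : ℝ) := by rw [hne]; linarith
      have hb : (n : ℝ) < 1 := by rw [hne]; linarith
      have ha' : (-1 : ℤ) < n := by exact_mod_cast ha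
      have hb' : (n : ℤ) < 1 := by exact_mod_cast hb
      omega
    rw [hsn, hn0]; push_cast; ring
  have hπ : (0:ℝ) < π := Real.pi_pos
  have hsurj : ψ '' Set.Icc 0 1 = Metric.sphere w₀ r := by
    apply Subset.antisymm
    · rintro _ ⟨t, _, rfl⟩; exact hmem t
    · intro p hp
      have hpd : Real.sqrt (∑ i, ‖(p - w₀) i‖ ^ 2) = r := by
        rw [← EuclideanSpace.norm_eq, ← dist_eq_norm, ← Metric.mem_sphere]; exact hp
      have hv : (p 0 - w₀ 0)^2 + (p 1 - w₀ 1)^2 = r^2 := by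
        have hS : ∑ i, ‖(p - w₀) i‖ ^ 2 = (p 0 - w₀ 0)^2 + (p 1 - w₀ 1)^2 := by
          rw [Fin.sum_univ_two]
          have h0 : (p - w₀) 0 = p 0 - w₀ 0 := rfl
          have h1 : (p - w₀) 1 = p 1 - w₀ 1 := rfl
          rw [h0, h1, Real.norm_eq_abs, Real.norm_eq_abs, sq_abs, sq_abs]
        have hnn : (0:ℝ) ≤ ∑ i, ‖(p - w₀) i‖ ^ 2 :=
          Finset.sum_nonneg fun i _ => sq_nonneg _
        calc (p 0 - w₀ 0)^2 + (p 1 - w₀ 1)^2 = ∑ i, ‖(p - w₀) i‖ ^ 2 := hS.symm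
          _ = Real.sqrt (∑ i, ‖(p - w₀) i‖ ^ 2) ^ 2 := (Real.sq_sqrt hnn).symm
          _ = r ^ 2 := by rw [hpd]
      set v0 := p 0 - w₀ 0 with hv0
      set v1 := p 1 - w₀ 1 with hv1
      set a : ℝ := -(ξ 0 * v0 + ξ 1 * v1) with ha
      set b : ℝ := -(ξ 1) * v0 + ξ 0 * v1 with hb
      have hab : a^2 + b^2 = r^2 := by
        rw [ha, hb]
        linear_combination (v0^2 + v1^2) * hξ2 + hv
      set z : ℂ := (a : ℂ) + (b : ℂ) * Complex.I with hz
      have hzre : z.re = a := by simp [hz]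
      have hzim : z.im = b := by simp [hz]
      have hzabs : ‖z‖ = r := by
        rw [hz, Complex.norm_def, Complex.normSq_add_mul_I, hab]
        exact Real.sqrt_sq hr.le
      have hz0 : z ≠ 0 := by
        intro h; rw [h] at hzabs; simp at hzabs; exact hr.ne' hzabs.symm
      set t : ℝ := Complex.arg z / (2*π) with htdef
      have h2πt : 2*π*t = Complex.arg z := by
        rw [htdef]; field_simp
      have hcosv : Real.cos (2*π*t) = a / r := by
        rw [h2πt, Complex.cos_arg hz0, hzabs, hzre]
      have hsinv : Real.sin (2*π*t) = b / r := by
        rw [h2πt, Complex.sin_arg, hzabs, hzim]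
      have hψt : ψ t = p := by
        have h0 := (hcoord t).1
        have h1 := (hcoord t).2
        ext i
        fin_cases i
        · show ψ t 0 = p 0
          rw [h0, hcosv, hsinv]
          rw [show r * (a/r) = a from by field_simp, show r * (b/r) = b from by field_simp]
          have hp0 : p 0 = w₀ 0 + v0 := by rw [hv0]; ring
          rw [hp0]
          linear_combination v0 * hξ2 + (-(ξ 0)) * ha + (-(ξ 1)) * hb
        · show ψ t 1 = p 1
          rw [h1, hcosv, hsinv]
          rw [show r * (a/r) = a from by field_simp, show r * (b/r) = b from by field_simp]
          have hp1 : p 1 = w₀ 1 + v1 := by rw [hv1]; ring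
          rw [hp1]
          linear_combination v1 * hξ2 + (-(ξ 1)) * ha + (ξ 0) * hb
      refine ⟨Int.fract t, ⟨Int.fract_nonneg t, (Int.fract_lt_one t).le⟩, ?_⟩
      have : ψ (Int.fract t) = ψ t := by
        rw [Int.fract]
        have := hper.sub_int_mul_eq (x := t) ⌊t⌋; rw [mul_one] at this; exact this
      rw [this, hψt]
  exact ⟨ψ, hcont, hper, hinj, hsurj, hval⟩

/-- Let `G` be a Jordan domain with boundary `Γ`, and let `U : cl G → cl B_r(w₀)` be a
homeomorphism mapping `Γ` onto the circle `∂B_r(w₀)`.  Then for every unit vector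
`ξ ∈ ℝ²`, the function `g = (U·ξ)|_Γ` is unimodal on `Γ`. -/
theorem boundary_component_unimodal
    (G : Set E2) (hG : IsJordanDomain G) (r : ℝ) (hr : 0 < r) (w₀ : E2)
    (U : E2 → E2)
    (hUc : ContinuousOn U (closure G)) (hUi : Set.InjOn U (closure G))
    (hUim : U '' closure G = Metric.closedBall w₀ r)
    (hUbd : U '' frontier G = Metric.sphere w₀ r) :
    ∀ ξ : E2, ‖ξ‖ = 1 →
      UnimodalOn (fun x => ∑ i, U x i * ξ i) (frontier G) := by
  intro ξ hξ
  obtain ⟨ψ, hψc, hψp, hψi, hψs, hψv⟩ := circle_param r hr w₀ ξ hξ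
  have hπ : (0:ℝ) < π := Real.pi_pos
  set Γ : Set E2 := frontier G with hΓ
  have hΓsub : Γ ⊆ closure G := frontier_subset_closure
  have hΓcomp : IsCompact Γ := by
    have hGbd : Bornology.IsBounded (closure G) := hG.2.2.1.closure
    exact Metric.isCompact_of_isClosed_isBounded isClosed_frontier
      (hGbd.subset hΓsub)
  have hψmem : ∀ t, ψ t ∈ Metric.sphere w₀ r := by
    intro t
    have h1 : ψ (Int.fract t) = ψ t := by
      rw [Int.fract]; have := hψp.sub_int_mul_eq (x := t) ⌊t⌋; rw [mul_one] at this; exact this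
    rw [← h1, ← hψs]
    exact Set.mem_image_of_mem _ ⟨Int.fract_nonneg t, (Int.fract_lt_one t).le⟩
  have hgc : ContinuousOn (fun x => ∑ i, U x i * ξ i) Γ := by
    apply ContinuousOn.mono _ hΓsub
    apply continuousOn_finset_sum
    intro i _
    exact ((PiLp.continuous_apply 2 _ i).comp_continuousOn hUc).mul continuousOn_const
  haveI : CompactSpace Γ := isCompact_iff_compactSpace.mp hΓcomp
  have himem : ∀ x : Γ, U x ∈ Metric.sphere w₀ r := fun x =>
    hUbd ▸ Set.mem_image_of_mem U x.2
  set f : Γ → Metric.sphere w₀ r := fun x => ⟨U x, himem x⟩ with hf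
  have hfc : Continuous f := by
    apply Continuous.subtype_mk
    exact continuousOn_iff_continuous_restrict.mp (hUc.mono hΓsub)
  have hfbij : Function.Bijective f := by
    constructor
    · intro x y hxy
      exact Subtype.ext (hUi (hΓsub x.2) (hΓsub y.2) (congrArg Subtype.val hxy))
    · intro y
      have : (y : E2) ∈ U '' Γ := by rw [hUbd]; exact y.2
      obtain ⟨x, hx, hxy⟩ := this
      exact ⟨⟨x, hx⟩, Subtype.ext hxy⟩
  set e : Γ ≃ Metric.sphere w₀ r := Equiv.ofBijective f hfbij with he
  have hec : Continuous e := hfc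
  set h : Γ ≃ₜ Metric.sphere w₀ r := Continuous.homeoOfEquivCompactToT2 hec with hh
  set φ : ℝ → E2 := fun t => ((h.symm ⟨ψ t, hψmem t⟩ : Γ) : E2) with hφ
  have hUφ : ∀ t, U (φ t) = ψ t := by
    intro t
    have h1 : h (h.symm ⟨ψ t, hψmem t⟩) = ⟨ψ t, hψmem t⟩ := h.apply_symm_apply _
    have h2 : f (h.symm ⟨ψ t, hψmem t⟩) = ⟨ψ t, hψmem t⟩ := h1
    exact congrArg Subtype.val h2
  have hφmem : ∀ t, φ t ∈ Γ := fun t => (h.symm ⟨ψ t, hψmem t⟩).2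
  have hφc : Continuous φ := by
    apply continuous_subtype_val.comp
    exact h.symm.continuous.comp (hψc.subtype_mk hψmem)
  have hφp : Function.Periodic φ 1 := by
    intro t
    simp only [hφ]
    congr 2
    exact Subtype.ext (hψp t)
  have hφinj : Set.InjOn φ (Set.Ico 0 1) := by
    intro s hs t ht hst
    apply hψi hs ht
    rw [← hUφ s, ← hUφ t, hst]
  have hφim : φ '' Set.Icc 0 1 = Γ := by
    apply Set.Subset.antisymm
    · rintro _ ⟨t, _, rfl⟩; exact hφmem t
    · intro x hx
      have : U x ∈ Metric.sphere w₀ r := himem ⟨x, hx⟩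
      rw [← hψs] at this
      obtain ⟨t, ht, htx⟩ := this
      refine ⟨t, ht, ?_⟩
      have h1 : (⟨ψ t, hψmem t⟩ : Metric.sphere w₀ r) = f ⟨x, hx⟩ := Subtype.ext htx
      have h2 : (⟨ψ t, hψmem t⟩ : Metric.sphere w₀ r) = h ⟨x, hx⟩ := h1
      simp only [hφ, h2, h.symm_apply_apply]
  have hgφ : ∀ t, (fun x => ∑ i, U x i * ξ i) (φ t)
      = (∑ i, w₀ i * ξ i) - r * Real.cos (2*π*t) := by
    intro t
    simp only [hUφ t]
    exact hψv t
  refine ⟨hgc, ?_, φ, 1/2, ⟨by norm_num, by norm_num⟩, hφc, hφp, hφinj, hφim, ?_, ?_⟩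
  · rintro ⟨c, hc⟩
    have h0 := hc (φ 0) (hφmem 0)
    have h1 := hc (φ (1/2)) (hφmem (1/2))
    rw [hgφ 0] at h0
    rw [hgφ (1/2)] at h1
    rw [show 2*π*(0:ℝ) = 0 by ring, Real.cos_zero] at h0
    rw [show 2*π*(1/2:ℝ) = π by ring, Real.cos_pi] at h1
    have : r = 0 := by linarith
    exact hr.ne' this
  · intro s hs t ht hst
    simp only [Function.comp_apply, hgφ]
    have hcc : Real.cos (2*π*t) ≤ Real.cos (2*π*s) := by
      apply Real.cos_le_cos_of_nonneg_of_le_pi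
      · nlinarith [hs.1]
      · nlinarith [ht.2]
      · nlinarith
    nlinarith
  · intro s hs t ht hst
    simp only [Function.comp_apply, hgφ]
    have hcc : Real.cos (2*π*s) ≤ Real.cos (2*π*t) := by
      rw [← Real.cos_two_pi_sub (2*π*s), ← Real.cos_two_pi_sub (2*π*t)]
      apply Real.cos_le_cos_of_nonneg_of_le_pi
      · nlinarith [ht.2]
      · nlinarith [hs.1]
      · nlinarith
    nlinarith
end
end
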